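/- Define p : ℝ² → L¹(ℝ, dx) by p(a, b)(x) = ((1 − a) e^{−x²/2} + a e^{−(x−b)²/2}) / √(2π), where dx is the Lebesgue measure on ℝ. Then p is Fréchet differentiable at (a, b) = (0, 0) with Fréchet derivative equal to the zero linear map from ℝ² to L¹(ℝ, dx). -/

import Mathlib

open MeasureTheory Real

lemma gmix_tendsto :
    Filter.Tendsto (fun b : ℝ => ∫ x : ℝ, |Real.exp (-(x - b) ^ 2 / 2) - Real.exp (-x ^ 2 / 2)|)
      (nhds 0) (nhds 0) := by
  have main : Filter.Tendsto
      (fun b : ℝ => ∫ x : ℝ, |Real.exp (-(x - b) ^ 2 / 2) - Real.exp (-x ^ 2 / 2)|)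
      (nhds 0) (nhds (∫ _x : ℝ, (0 : ℝ))) := by
    apply MeasureTheory.tendsto_integral_filter_of_dominated_convergence
        (fun x : ℝ => 2 * Real.exp 1 * Real.exp (-(1/4) * x ^ 2))
    · filter_upwards with b
      apply Continuous.aestronglyMeasurable
      fun_prop
    · filter_upwards [Metric.ball_mem_nhds (0 : ℝ) one_pos] with b hb
      filter_upwards with x
      have hb1 : |b| ≤ 1 := le_of_lt (by simp only [Metric.mem_ball, Real.dist_eq, sub_zero] at hb; exact hb)
      have hbx : b * x ≤ |x| := by
        calc b * x ≤ |b * x| := le_abs_self _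
        _ = |b| * |x| := abs_mul _ _
        _ ≤ 1 * |x| := by gcongr
        _ = |x| := one_mul _
      have key : ∀ y : ℝ, y * x ≤ |x| →
          Real.exp (-(x - y) ^ 2 / 2) ≤ Real.exp 1 * Real.exp (-(1/4) * x ^ 2) := by
        intro y hy
        rw [← Real.exp_add]
        apply Real.exp_le_exp.2
        nlinarith [hy, sq_nonneg y, sq_nonneg (|x| - 2), sq_abs x]
      have h1 := key b hbx
      have h2 := key 0 (by simp only [zero_mul]; exact abs_nonneg x)
      simp only [sub_zero] at h2
      rw [Real.norm_eq_abs, abs_abs]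
      calc |Real.exp (-(x - b) ^ 2 / 2) - Real.exp (-x ^ 2 / 2)|
          ≤ Real.exp (-(x - b) ^ 2 / 2) + Real.exp (-x ^ 2 / 2) :=
            (abs_sub _ _).trans (by rw [abs_of_pos (Real.exp_pos _), abs_of_pos (Real.exp_pos _)])
        _ ≤ 2 * Real.exp 1 * Real.exp (-(1/4) * x ^ 2) := by linarith
    · exact ((integrable_exp_neg_mul_sq (by norm_num : (0:ℝ) < 1/4)).const_mul _)
    · filter_upwards with x
      have hc : Continuous fun b : ℝ => |Real.exp (-(x - b) ^ 2 / 2) - Real.exp (-x ^ 2 / 2)| := by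
        fun_prop
      simpa using hc.tendsto 0
  simpa using main


/-- The Gaussian mixture family `p(a, b) = ((1-a) e^{-x²/2} + a e^{-(x-b)²/2})/√(2π)`,
viewed as a map `P : ℝ² → L¹(ℝ, dx)` (i.e. `P (a, b)` is the `L¹`-class of the above
density), is Fréchet differentiable at `(a, b) = (0, 0)` with Fréchet derivative the zero
linear map `ℝ² → L¹(ℝ, dx)`. -/
theorem gaussian_mixture_frechet_derivative_zero
    (P : ℝ × ℝ → Lp ℝ 1 (volume : Measure ℝ))
    (hP : ∀ ab : ℝ × ℝ, (P ab : ℝ → ℝ) =ᵐ[volume] fun x : ℝ =>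
      ((1 - ab.1) * Real.exp (-x ^ 2 / 2) + ab.1 * Real.exp (-(x - ab.2) ^ 2 / 2)) /
        Real.sqrt (2 * π)) :
    HasFDerivAt P (0 : ℝ × ℝ →L[ℝ] Lp ℝ 1 (volume : Measure ℝ)) (0, 0) := by
  set C : ℝ := Real.sqrt (2 * π) with hC
  have hCpos : 0 < C := Real.sqrt_pos.2 (by positivity)
  set g : ℝ → ℝ := fun b => ∫ x : ℝ, |Real.exp (-(x - b) ^ 2 / 2) - Real.exp (-x ^ 2 / 2)|
    with hg
  -- norm formula
  have hnorm : ∀ ab : ℝ × ℝ, ‖P ab - P (0, 0)‖ = |ab.1| / C * g ab.2 := by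
    intro ab
    rw [MeasureTheory.L1.norm_eq_integral_norm]
    have hae : (fun x => ‖(P ab - P (0, 0) : Lp ℝ 1 (volume : Measure ℝ)) x‖)
        =ᵐ[volume] fun x : ℝ => |ab.1| / C * |Real.exp (-(x - ab.2) ^ 2 / 2) - Real.exp (-x ^ 2 / 2)| := by
      filter_upwards [Lp.coeFn_sub (P ab) (P (0, 0)), hP ab, hP (0, 0)] with x h1 h2 h3
      rw [h1]
      simp only [Pi.sub_apply, h2, h3]
      rw [Real.norm_eq_abs]
      rw [show ((1 - ab.1) * Real.exp (-x ^ 2 / 2) + ab.1 * Real.exp (-(x - ab.2) ^ 2 / 2)) / C -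
          ((1 - (0:ℝ)) * Real.exp (-x ^ 2 / 2) + 0 * Real.exp (-(x - (0:ℝ)) ^ 2 / 2)) / C
          = ab.1 * (Real.exp (-(x - ab.2) ^ 2 / 2) - Real.exp (-x ^ 2 / 2)) / C by ring]
      rw [abs_div, abs_mul, abs_of_pos hCpos]
      ring
    rw [integral_congr_ae hae, integral_const_mul]
  have hg0 : Filter.Tendsto (fun ab : ℝ × ℝ => g ab.2) (nhds (0, 0)) (nhds 0) := by
    exact gmix_tendsto.comp (Continuous.tendsto' continuous_snd _ _ rfl)
  rw [hasFDerivAt_iff_isLittleO, Asymptotics.isLittleO_iff]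
  intro c hc
  have hev : ∀ᶠ ab : ℝ × ℝ in nhds (0, 0), g ab.2 < c * C := by
    exact hg0.eventually_lt_const (by positivity)
  filter_upwards [hev] with ab hab
  simp only [ContinuousLinearMap.zero_apply, sub_zero]
  have hsub : ab - ((0 : ℝ), (0 : ℝ)) = ab := by simp
  rw [hsub, hnorm ab]
  have h1 : |ab.1| ≤ ‖ab‖ := by simpa using norm_fst_le ab
  calc |ab.1| / C * g ab.2 ≤ ‖ab‖ / C * (c * C) := by
        apply mul_le_mul (by gcongr) hab.le (by positivity) (by positivity)
    _ = c * ‖ab‖ := by field_simp
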